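/- Let p and q be coprime natural numbers with p, q ≥ 2. Then there exist natural numbers k, l ≥ 1 such that l·q − k·p = 1, 2·l > p, and 2·k > q. -/
import Mathlib


/-- for coprime p, q ≥ 2 there exist k, l ≥ 1 with l·q − k·p = 1,
2l > p and 2k > q. -/
theorem exists_bezout_with_bounds (p q : ℕ) (hp : 2 ≤ p) (hq : 2 ≤ q)
    (hpq : Nat.Coprime p q) :
    ∃ k l : ℕ, 1 ≤ k ∧ 1 ≤ l ∧ (l * q : ℤ) - (k * p : ℤ) = 1 ∧
      p < 2 * l ∧ q < 2 * k := by
  have h : IsCoprime (p : ℤ) (q : ℤ) := by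
    rw [Int.isCoprime_iff_gcd_eq_one]
    exact_mod_cast hpq
  obtain ⟨u, v, huv⟩ := h
  set N : ℤ := |u| + |v| + 2 with hN
  set L : ℤ := v + N * p with hLdef
  set K : ℤ := -u + N * q with hKdef
  have hp' : (2 : ℤ) ≤ p := by exact_mod_cast hp
  have hq' : (2 : ℤ) ≤ q := by exact_mod_cast hq
  have hL : (p : ℤ) < L := by
    have h1 := neg_abs_le v
    have h2 := abs_nonneg u
    have h3 := abs_nonneg v
    nlinarith
  have hK : (q : ℤ) < K := by
    have h1 := le_abs_self u
    have h2 := abs_nonneg u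
    have h3 := abs_nonneg v
    nlinarith
  have key : L * q - K * p = 1 := by
    simp only [hLdef, hKdef]
    linear_combination huv
  have hLpos : (0 : ℤ) ≤ L := by linarith
  have hKpos : (0 : ℤ) ≤ K := by linarith
  refine ⟨K.toNat, L.toNat, ?_, ?_, ?_, ?_, ?_⟩
  · have : (1 : ℤ) ≤ K := by linarith
    omega
  · have : (1 : ℤ) ≤ L := by linarith
    omega
  · rw [Int.toNat_of_nonneg hLpos, Int.toNat_of_nonneg hKpos]
    exact key
  · have : (p : ℤ) < 2 * L.toNat := by rw [Int.toNat_of_nonneg hLpos]; linarith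
    exact_mod_cast this
  · have : (q : ℤ) < 2 * K.toNat := by rw [Int.toNat_of_nonneg hKpos]; linarith
    exact_mod_cast this
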